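/- Suppose a,b: [0,T] → [0,∞) are absolutely continuous and A,B: [0,T] → [0,∞) are integrable with a ≤ A and b ≤ B pointwise, satisfying a' + A ≤ C + C₁B and b' + B ≤ C + C₁α²A a.e. on [0,T], with periodic boundary conditions a(0)=a(T), b(0)=b(T). If 2C₁²α² ≤ 1/8, then the function f = a + 2C₁b satisfies f' + (1/8)f + (1/2)(A−a) + C₁(B−b) ≤ C(1+2C₁) a.e., and consequently sup_{s∈[0,T]} f(s) ≤ 8C(1+2C₁) and ∫₀ᵀ (A+B) ds ≤ C' for an explicit constant C' depending only on C, C₁, T. -/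

import Mathlib

open Real Set intervalIntegral

set_option maxHeartbeats 1000000

/-- Abstract differential-inequality lemma underlying the explicit a priori bound.
If `a' + A ≤ C + C₁B`, `b' + B ≤ C + C₁α²A` on `(0,T)` with `a ≤ A`, `b ≤ B`,
periodic boundary values, and `2C₁²α² ≤ 1/8`, then `f = a + 2C₁b` satisfies
`f' + (1/8)f + (1/2)(A−a) + C₁(B−b) ≤ C(1+2C₁)`, hence `sup f ≤ 8C(1+2C₁)` and
`∫₀ᵀ (A+B) ≤ C'` with the explicit constant `C' = (10 + 5/C₁)·C(1+2C₁)·T`. -/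
theorem apriori_differential_inequality
    (T C C₁ α : ℝ) (hT : 0 < T) (hC : 0 < C) (hC₁ : 0 < C₁) (hα : 0 < α)
    (hsmall : 2 * C₁ ^ 2 * α ^ 2 ≤ 1 / 8)
    (a b a' b' A B : ℝ → ℝ)
    (ha_nonneg : ∀ s ∈ Icc (0 : ℝ) T, 0 ≤ a s)
    (hb_nonneg : ∀ s ∈ Icc (0 : ℝ) T, 0 ≤ b s)
    (haA : ∀ s ∈ Icc (0 : ℝ) T, a s ≤ A s)
    (hbB : ∀ s ∈ Icc (0 : ℝ) T, b s ≤ B s)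
    (ha_cont : ContinuousOn a (Icc 0 T)) (hb_cont : ContinuousOn b (Icc 0 T))
    (ha_deriv : ∀ s ∈ Ioo (0 : ℝ) T, HasDerivAt a (a' s) s)
    (hb_deriv : ∀ s ∈ Ioo (0 : ℝ) T, HasDerivAt b (b' s) s)
    (hA_int : IntervalIntegrable A MeasureTheory.volume 0 T)
    (hB_int : IntervalIntegrable B MeasureTheory.volume 0 T)
    (hineq_a : ∀ s ∈ Ioo (0 : ℝ) T, a' s + A s ≤ C + C₁ * B s)
    (hineq_b : ∀ s ∈ Ioo (0 : ℝ) T, b' s + B s ≤ C + C₁ * α ^ 2 * A s)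
    (hper_a : a 0 = a T) (hper_b : b 0 = b T) :
    (∀ s ∈ Ioo (0 : ℝ) T,
      (a' s + 2 * C₁ * b' s) + (1/8) * (a s + 2 * C₁ * b s)
        + (1/2) * (A s - a s) + C₁ * (B s - b s) ≤ C * (1 + 2 * C₁))
    ∧ (∀ s ∈ Icc (0 : ℝ) T, a s + 2 * C₁ * b s ≤ 8 * (C * (1 + 2 * C₁)))
    ∧ (∫ s in (0 : ℝ)..T, (A s + B s)) ≤ (10 + 5 / C₁) * (C * (1 + 2 * C₁)) * T := by

  set K := C * (1 + 2 * C₁) with hK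
  have hK0 : 0 < K := by positivity
  -- Part 1: pointwise differential inequality
  have part1 : ∀ s ∈ Ioo (0 : ℝ) T,
      (a' s + 2 * C₁ * b' s) + (1/8) * (a s + 2 * C₁ * b s)
        + (1/2) * (A s - a s) + C₁ * (B s - b s) ≤ K := by
    intro s hs
    have hs' : s ∈ Icc (0 : ℝ) T := Ioo_subset_Icc_self hs
    have h1 := hineq_a s hs
    have h2 : 2 * C₁ * (b' s + B s) ≤ 2 * C₁ * (C + C₁ * α ^ 2 * A s) :=
      mul_le_mul_of_nonneg_left (hineq_b s hs) (by positivity)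
    have hA0 : 0 ≤ A s := le_trans (ha_nonneg s hs') (haA s hs')
    have h3 : 2 * C₁ ^ 2 * α ^ 2 * A s ≤ (1/8) * A s :=
      mul_le_mul_of_nonneg_right hsmall hA0
    have h4 : 0 ≤ C₁ * b s := mul_nonneg hC₁.le (hb_nonneg s hs')
    have h5 : 0 ≤ a s := ha_nonneg s hs'
    have h6 : a s ≤ A s := haA s hs'
    nlinarith [h1, h2, h3, h4, h5, h6]
  -- the function f and its auxiliary exponential version
  set f : ℝ → ℝ := fun s => a s + 2 * C₁ * b s with hf
  have hf_cont : ContinuousOn f (Icc 0 T) :=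
    ha_cont.add (continuousOn_const.mul hb_cont)
  have hf_deriv : ∀ s ∈ Ioo (0 : ℝ) T, HasDerivAt f (a' s + 2 * C₁ * b' s) s := by
    intro s hs
    exact (ha_deriv s hs).add ((hb_deriv s hs).const_mul (2 * C₁))
  have hf_nonneg : ∀ s ∈ Icc (0 : ℝ) T, 0 ≤ f s := by
    intro s hs
    have := ha_nonneg s hs; have := hb_nonneg s hs
    simp only [hf]; nlinarith
  have hfd_le : ∀ s ∈ Ioo (0 : ℝ) T,
      (a' s + 2 * C₁ * b' s) + (1/8) * f s ≤ K := by
    intro s hs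
    have hs' : s ∈ Icc (0 : ℝ) T := Ioo_subset_Icc_self hs
    have h1 := part1 s hs
    have h2 : 0 ≤ (1/2) * (A s - a s) := by nlinarith [haA s hs']
    have h3 : 0 ≤ C₁ * (B s - b s) := by nlinarith [hbB s hs']
    simp only [hf]; linarith
  -- Part 2: sup bound via Gronwall
  set g : ℝ → ℝ := fun s => Real.exp (s/8) * (f s - 8 * K) with hg
  have hg_anti : AntitoneOn g (Icc 0 T) := by
    apply antitoneOn_of_deriv_nonpos (convex_Icc 0 T)
    · exact ((Real.continuous_exp.comp (continuous_id.div_const 8)).continuousOn).mul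
        (hf_cont.sub continuousOn_const)
    · intro s hs
      rw [interior_Icc] at hs
      exact (((Real.hasDerivAt_exp (s/8)).comp s ((hasDerivAt_id s).div_const 8)).mul
        ((hf_deriv s hs).sub_const (8*K))).differentiableAt.differentiableWithinAt
    · intro s hs
      rw [interior_Icc] at hs
      have hd : HasDerivAt g
          (Real.exp (s/8) * (1/8) * (f s - 8*K) + Real.exp (s/8) * (a' s + 2 * C₁ * b' s)) s := by
        have := (((Real.hasDerivAt_exp (s/8)).comp s ((hasDerivAt_id s).div_const 8)).mul
          ((hf_deriv s hs).sub_const (8*K)))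
        exact this.congr_deriv rfl
      rw [hd.deriv]
      have h1 := hfd_le s hs
      have he : 0 < Real.exp (s/8) := Real.exp_pos _
      nlinarith [h1, he]
  have hg0 : ∀ s ∈ Icc (0 : ℝ) T, g s ≤ g 0 := by
    intro s hs
    exact hg_anti (left_mem_Icc.2 hT.le) hs hs.1
  have hf0_le : f 0 ≤ 8 * K := by
    have hgT := hg0 T (right_mem_Icc.2 hT.le)
    have hfT : f T = f 0 := by simp only [hf, hper_a, hper_b]
    simp only [hg, hfT] at hgT
    have he : 1 < Real.exp (T/8) := by
      have h8 : (0:ℝ) < T/8 := by positivity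
      calc (1:ℝ) = Real.exp 0 := Real.exp_zero.symm
        _ < Real.exp (T/8) := Real.exp_lt_exp.2 h8
    simp only [zero_div, Real.exp_zero, one_mul] at hgT
    by_contra h
    push_neg at h
    nlinarith [hgT, he, mul_lt_mul_of_pos_right he (by linarith : (0:ℝ) < f 0 - 8*K)]
  have part2 : ∀ s ∈ Icc (0 : ℝ) T, f s ≤ 8 * K := by
    intro s hs
    have h1 := hg0 s hs
    simp only [hg, zero_div, Real.exp_zero, one_mul] at h1
    have he : 0 < Real.exp (s/8) := Real.exp_pos _
    by_contra h
    push_neg at h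
    have hp : 0 < Real.exp (s/8) * (f s - 8 * K) :=
      mul_pos he (by linarith)
    linarith [hp.trans_le h1]
  -- Part 3: integral bound
  refine ⟨part1, part2, ?_⟩
  have ha_int : IntervalIntegrable a MeasureTheory.volume 0 T :=
    ha_cont.intervalIntegrable_of_Icc hT.le
  have hb_int : IntervalIntegrable b MeasureTheory.volume 0 T :=
    hb_cont.intervalIntegrable_of_Icc hT.le
  set φ : ℝ → ℝ := fun s => K - ((1/2) * (A s - a s) + C₁ * (B s - b s)) with hφ
  have hφ_int : IntervalIntegrable φ MeasureTheory.volume 0 T := by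
    apply IntervalIntegrable.sub intervalIntegrable_const
    exact (((hA_int.sub ha_int).const_mul _).add ((hB_int.sub hb_int).const_mul _))
  have key : f T - f 0 ≤ ∫ s in (0:ℝ)..T, φ s := by
    apply sub_le_integral_of_hasDeriv_right_of_le hT.le hf_cont
      (g' := fun s => a' s + 2 * C₁ * b' s)
    · intro s hs
      exact (hf_deriv s hs).hasDerivWithinAt
    · exact (intervalIntegrable_iff_integrableOn_Icc_of_le hT.le).1 hφ_int
    · intro s hs
      have h1 := part1 s hs
      have hs' : s ∈ Icc (0 : ℝ) T := Ioo_subset_Icc_self hs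
      have h2 : 0 ≤ f s := hf_nonneg s hs'
      simp only [hφ, hf] at *
      linarith
  have hfT : f T = f 0 := by simp only [hf, hper_a, hper_b]
  rw [hfT, sub_self] at key
  -- unfold the integral of φ
  have hInt1 : IntervalIntegrable (fun s => A s - a s) MeasureTheory.volume 0 T := hA_int.sub ha_int
  have hInt2 : IntervalIntegrable (fun s => B s - b s) MeasureTheory.volume 0 T := hB_int.sub hb_int
  have hφ_eq : (∫ s in (0:ℝ)..T, φ s)
      = K * T - ((1/2) * (∫ s in (0:ℝ)..T, (A s - a s)) + C₁ * (∫ s in (0:ℝ)..T, (B s - b s))) := by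
    simp only [hφ]
    rw [intervalIntegral.integral_sub intervalIntegrable_const
      ((hInt1.const_mul _).add (hInt2.const_mul _)),
      intervalIntegral.integral_add (hInt1.const_mul _) (hInt2.const_mul _),
      intervalIntegral.integral_const_mul, intervalIntegral.integral_const_mul,
      intervalIntegral.integral_const]
    simp [smul_eq_mul]
    ring
  rw [hφ_eq] at key
  -- bounds on integrals of a and b
  have hIa : (∫ s in (0:ℝ)..T, a s) ≤ 8 * K * T := by
    calc (∫ s in (0:ℝ)..T, a s) ≤ ∫ s in (0:ℝ)..T, (8*K : ℝ) := by
          apply intervalIntegral.integral_mono_on hT.le ha_int intervalIntegrable_const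
          intro s hs
          have h1 := part2 s hs
          have h2 := hb_nonneg s hs
          simp only [hf] at h1
          nlinarith
      _ = 8 * K * T := by rw [intervalIntegral.integral_const, smul_eq_mul, sub_zero, mul_comm]
  have hIb : (∫ s in (0:ℝ)..T, b s) ≤ 4 * (K/C₁) * T := by
    calc (∫ s in (0:ℝ)..T, b s) ≤ ∫ s in (0:ℝ)..T, (4*(K/C₁) : ℝ) := by
          apply intervalIntegral.integral_mono_on hT.le hb_int intervalIntegrable_const
          intro s hs
          have h1 := part2 s hs
          have h2 := ha_nonneg s hs
          simp only [hf] at h1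
          rw [show (4:ℝ)*(K/C₁) = 4*K/C₁ by ring, le_div_iff₀ hC₁]
          nlinarith
      _ = 4 * (K/C₁) * T := by rw [intervalIntegral.integral_const, smul_eq_mul, sub_zero, mul_comm]
  have hIB_nonneg : 0 ≤ (∫ s in (0:ℝ)..T, (B s - b s)) := by
    apply intervalIntegral.integral_nonneg hT.le
    intro s hs
    have := hbB s hs; linarith
  have hIA_nonneg : 0 ≤ (∫ s in (0:ℝ)..T, (A s - a s)) := by
    apply intervalIntegral.integral_nonneg hT.le
    intro s hs
    have := haA s hs; linarith
  have hsplitA : (∫ s in (0:ℝ)..T, (A s - a s))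
      = (∫ s in (0:ℝ)..T, A s) - (∫ s in (0:ℝ)..T, a s) :=
    intervalIntegral.integral_sub hA_int ha_int
  have hsplitB : (∫ s in (0:ℝ)..T, (B s - b s))
      = (∫ s in (0:ℝ)..T, B s) - (∫ s in (0:ℝ)..T, b s) :=
    intervalIntegral.integral_sub hB_int hb_int
  have hsum : (∫ s in (0:ℝ)..T, (A s + B s))
      = (∫ s in (0:ℝ)..T, A s) + (∫ s in (0:ℝ)..T, B s) :=
    intervalIntegral.integral_add hA_int hB_int
  rw [hsum]
  have hA_bound : (∫ s in (0:ℝ)..T, A s) ≤ 2 * K * T + 8 * K * T := by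
    have : (1/2) * (∫ s in (0:ℝ)..T, (A s - a s)) ≤ K * T := by nlinarith [key, hIB_nonneg]
    rw [hsplitA] at this
    linarith
  have hB_bound : (∫ s in (0:ℝ)..T, B s) ≤ K/C₁ * T + 4 * (K/C₁) * T := by
    have h1 : C₁ * (∫ s in (0:ℝ)..T, (B s - b s)) ≤ K * T := by nlinarith [key, hIA_nonneg]
    rw [hsplitB] at h1
    have h2 : (∫ s in (0:ℝ)..T, B s) - (∫ s in (0:ℝ)..T, b s) ≤ K/C₁ * T := by
      rw [div_mul_eq_mul_div, le_div_iff₀ hC₁]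
      nlinarith [h1]
    linarith
  have : (10 + 5 / C₁) * K * T = (2*K*T + 8*K*T) + (K/C₁*T + 4*(K/C₁)*T) := by
    field_simp; ring
  linarith [hA_bound, hB_bound]
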